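/- arXiv:0708.3839 — 2 statements merged into one kernel-verified Lean document; each statement's English description precedes it below -/
import Mathlib

section
/- Let Q be a connected quiver with #Q_1 = #Q_0 + 1, at least 6 vertices, all vertex degrees between 2 and 4, and at most one vertex of degree 4 or at most two of degree 3 (with all other vertices of degree 2). Then Q contains two adjacent vertices both of degree 2. -/
open Function CategoryTheory

/-- A finite quiver: finitely many vertices and arrows with source and target maps. -/
structure FinQuiver where
  nV : ℕ
  nA : ℕ
  src : Fin nA → Fin nV
  tgt : Fin nA → Fin nV

namespace FinQuiver

variable (Q : FinQuiver)

/-- Adjacency in the underlying undirected multigraph, using only arrows from `S`. -/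
def adjOn (S : Finset (Fin Q.nA)) (v w : Fin Q.nV) : Prop :=
  ∃ a ∈ S, (Q.src a = v ∧ Q.tgt a = w) ∨ (Q.src a = w ∧ Q.tgt a = v)

/-- Adjacency in the underlying undirected multigraph. -/
def adj (v w : Fin Q.nV) : Prop := Q.adjOn Finset.univ v w

/-- The subquiver with arrows `S` is connected (as an undirected multigraph). -/
def ConnectedOn (S : Finset (Fin Q.nA)) : Prop :=
  ∀ v w : Fin Q.nV, Relation.ReflTransGen (Q.adjOn S) v w

/-- The quiver is connected. -/
def Connected : Prop := 0 < Q.nV ∧ Q.ConnectedOn Finset.univ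

/-- The subquiver on the arrow set `S` is a (spanning) tree: it is connected and
has `#vertices - 1` arrows. -/
def IsSpanningTreeOn (S : Finset (Fin Q.nA)) : Prop :=
  Q.ConnectedOn S ∧ S.card + 1 = Q.nV

/-- The number of cycles of `Q`: the least number of arrows one has to remove from `Q`
in order to obtain a tree. -/
noncomputable def numCycles : ℕ :=
  sInf {n | ∃ R : Finset (Fin Q.nA), R.card = n ∧ Q.IsSpanningTreeOn Rᶜ}

/-- The degree of a vertex: number of arrows starting at `v` plus number of arrows ending
at `v`. -/
def deg (v : Fin Q.nV) : ℕ :=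
  (Finset.univ.filter fun a => Q.src a = v).card +
    (Finset.univ.filter fun a => Q.tgt a = v).card

/-- The two endpoints of a step of an undirected walk: an arrow together with the direction
in which it is traversed. -/
def stepEnds (p : Fin Q.nA × Bool) : Fin Q.nV × Fin Q.nV :=
  if p.2 then (Q.src p.1, Q.tgt p.1) else (Q.tgt p.1, Q.src p.1)

/-- An (undirected) trail: consecutive steps match and no arrow is used twice. -/
def IsTrail (w : List (Fin Q.nA × Bool)) : Prop :=
  (w.map Prod.fst).Nodup ∧ w.Chain' (fun p q => (Q.stepEnds p).2 = (Q.stepEnds q).1)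

/-- A trail from `v` to `v'`. -/
def TrailFromTo (w : List (Fin Q.nA × Bool)) (v v' : Fin Q.nV) : Prop :=
  Q.IsTrail w ∧ (∃ p, w.head? = some p ∧ (Q.stepEnds p).1 = v) ∧
    ∃ q, w.getLast? = some q ∧ (Q.stepEnds q).2 = v'

/-- The trail `w` visits the vertex `v`. -/
def Visits (w : List (Fin Q.nA × Bool)) (v : Fin Q.nV) : Prop :=
  ∃ p ∈ w, (Q.stepEnds p).1 = v ∨ (Q.stepEnds p).2 = v

/-- The vertex `v` lies on an (undirected) cycle of `Q`. -/
def OnCycle (v : Fin Q.nV) : Prop :=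
  ∃ w, w ≠ [] ∧ Q.TrailFromTo w v v

/-- The vertex `v` belongs to a cycle or to a trajectory joining two vertices belonging
to cycles. -/
def InCore (v : Fin Q.nV) : Prop :=
  Q.OnCycle v ∨
    ∃ v1 v2 w, Q.OnCycle v1 ∧ Q.OnCycle v2 ∧ Q.TrailFromTo w v1 v2 ∧ Q.Visits w v

/-- `Q` has a rooted tree of depth strictly greater than one: there are two adjacent
vertices outside the core. -/
def HasDeepRootedTree : Prop :=
  ∃ u1 u2 : Fin Q.nV, u1 ≠ u2 ∧ ¬ Q.InCore u1 ∧ ¬ Q.InCore u2 ∧ Q.adj u1 u2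

end FinQuiver

/-- A gentle algebra, presented combinatorially as a quiver with a set of length-two
monomial relations (`rel b a` means that the composition `b ∘ a` is a zero relation). -/
structure GentleAlg extends FinQuiver where
  rel : Fin nA → Fin nA → Prop
  rel_dec : DecidableRel rel
  rel_comp : ∀ b a, rel b a → src b = tgt a
  out_le_two : ∀ v, Nat.card {a : Fin nA // src a = v} ≤ 2
  in_le_two : ∀ v, Nat.card {a : Fin nA // tgt a = v} ≤ 2
  perm_pred_unique : ∀ b a a', src b = tgt a → ¬ rel b a → src b = tgt a' → ¬ rel b a' → a = a'
  perm_succ_unique : ∀ b c c', src c = tgt b → ¬ rel c b → src c' = tgt b → ¬ rel c' b → c = c'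
  rel_pred_unique : ∀ b a a', rel b a → rel b a' → a = a'
  rel_succ_unique : ∀ b c c', rel c b → rel c' b → c = c'
  no_perm_cycle : ∀ l : List (Fin nA), l ≠ [] →
    l.Chain' (fun a b => tgt a = src b ∧ ¬ rel b a) →
    ∀ h hl, l.head? = some h → l.getLast? = some hl → tgt hl = src h → rel h hl

namespace GentleAlg

variable (A : GentleAlg)

/-- A permitted path: consecutive arrows compose and no two consecutive arrows form a
zero relation. -/
def IsPermPath (l : List (Fin A.nA)) : Prop :=
  l.Chain' (fun a b => A.tgt a = A.src b ∧ ¬ A.rel b a)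

/-- A non-trivial permitted thread: a nonempty permitted path which is maximal. -/
def IsNontrivPermThread (l : List (Fin A.nA)) : Prop :=
  l ≠ [] ∧ A.IsPermPath l ∧ (∀ a, ¬ A.IsPermPath (a :: l)) ∧ ∀ a, ¬ A.IsPermPath (l ++ [a])

/-- The vertex `v` carries a trivial permitted thread. -/
def HasTrivPermThread (v : Fin A.nV) : Prop :=
  Nat.card {a : Fin A.nA // A.src a = v} ≤ 1 ∧ Nat.card {a : Fin A.nA // A.tgt a = v} ≤ 1 ∧
    ∀ b c, A.tgt b = v → A.src c = v → ¬ A.rel c b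

/-- The number of permitted threads (trivial and non-trivial) of `A`. -/
noncomputable def numPermThreads : ℕ :=
  Nat.card {l : List (Fin A.nA) // A.IsNontrivPermThread l} +
    Nat.card {v : Fin A.nV // A.HasTrivPermThread v}

/-- A forbidden path: pairwise distinct arrows, any two consecutive ones forming a zero
relation. -/
def IsForbPath (l : List (Fin A.nA)) : Prop :=
  l.Nodup ∧ l.Chain' (fun a b => A.rel b a)

/-- A non-trivial forbidden thread: a nonempty maximal forbidden path. -/
def IsNontrivForbThread (l : List (Fin A.nA)) : Prop :=
  l ≠ [] ∧ A.IsForbPath l ∧ (∀ a, ¬ A.IsForbPath (a :: l)) ∧ ∀ a, ¬ A.IsForbPath (l ++ [a])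

/-- The vertex `v` carries a trivial forbidden thread. -/
def HasTrivForbThread (v : Fin A.nV) : Prop :=
  Nat.card {a : Fin A.nA // A.src a = v} ≤ 1 ∧ Nat.card {a : Fin A.nA // A.tgt a = v} ≤ 1 ∧
    ∀ b c, A.tgt b = v → A.src c = v → A.rel c b

/-- The type of permitted threads of `A` (non-trivial ones and trivial ones). -/
abbrev PermThread : Type :=
  {l : List (Fin A.nA) // A.IsNontrivPermThread l} ⊕ {v : Fin A.nV // A.HasTrivPermThread v}

/-- The type of forbidden threads of `A` (non-trivial ones and trivial ones). -/
abbrev ForbThread : Type :=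
  {l : List (Fin A.nA) // A.IsNontrivForbThread l} ⊕ {v : Fin A.nV // A.HasTrivForbThread v}

/-- Start vertex of a permitted thread. -/
def pStart : A.PermThread → Fin A.nV
  | .inl l => A.src (l.1.head l.2.1)
  | .inr v => v.1

/-- End vertex of a permitted thread. -/
def pEnd : A.PermThread → Fin A.nV
  | .inl l => A.tgt (l.1.getLast l.2.1)
  | .inr v => v.1

/-- Start vertex of a forbidden thread. -/
def fStart : A.ForbThread → Fin A.nV
  | .inl l => A.src (l.1.head l.2.1)
  | .inr v => v.1

/-- End vertex of a forbidden thread. -/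
def fEnd : A.ForbThread → Fin A.nV
  | .inl l => A.tgt (l.1.getLast l.2.1)
  | .inr v => v.1

/-- The length (number of arrows) of a forbidden thread. -/
def forbLen : A.ForbThread → ℕ
  | .inl l => l.1.length
  | .inr _ => 0

/-- A full cycle of relations (contributing a pair `(0, m)` to the invariant). -/
def IsRelCycle (l : List (Fin A.nA)) : Prop :=
  l ≠ [] ∧ l.Nodup ∧ l.Chain' (fun a b => A.rel b a) ∧
    ∃ h hl, l.head? = some h ∧ l.getLast? = some hl ∧ A.rel h hl

end GentleAlg

/-- A choice of the sign functions `σ, ε : Q₁ → {1,-1}` of Butler–Ringel for a gentle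
algebra. -/
structure GentleAlg.Signs (G : GentleAlg) where
  sgn : Fin G.nA → Bool
  esgn : Fin G.nA → Bool
  sgn_src : ∀ a b, a ≠ b → G.src a = G.src b → sgn a ≠ sgn b
  esgn_tgt : ∀ a b, a ≠ b → G.tgt a = G.tgt b → esgn a ≠ esgn b
  sgn_comp : ∀ a b, G.src b = G.tgt a → ¬ G.rel b a → sgn b = ! esgn a

namespace GentleAlg.Signs

variable {G : GentleAlg} (S : G.Signs)

/-- The sign `σ` of the trivial permitted thread at a vertex. -/
noncomputable def pTrivSgn (v : Fin G.nV) : Bool :=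
  if h : ∃ c, G.src c = v then ! S.sgn h.choose
  else if h2 : ∃ b, G.tgt b = v then S.esgn h2.choose
  else false

/-- The sign `σ` of the trivial forbidden thread at a vertex. -/
noncomputable def fTrivSgn (v : Fin G.nV) : Bool :=
  if h : ∃ c, G.src c = v then ! S.sgn h.choose
  else if h2 : ∃ b, G.tgt b = v then ! S.esgn h2.choose
  else false

/-- The sign `σ` of a permitted thread. -/
noncomputable def pSgn : G.PermThread → Bool
  | .inl l => S.sgn (l.1.head l.2.1)
  | .inr v => S.pTrivSgn v.1

/-- The sign `ε` of a permitted thread. -/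
noncomputable def pEps : G.PermThread → Bool
  | .inl l => S.esgn (l.1.getLast l.2.1)
  | .inr v => ! S.pTrivSgn v.1

/-- The sign `σ` of a forbidden thread. -/
noncomputable def fSgn : G.ForbThread → Bool
  | .inl l => S.sgn (l.1.head l.2.1)
  | .inr v => S.fTrivSgn v.1

/-- The sign `ε` of a forbidden thread. -/
noncomputable def fEps : G.ForbThread → Bool
  | .inl l => S.esgn (l.1.getLast l.2.1)
  | .inr v => S.fTrivSgn v.1

end GentleAlg.Signs

/-- The pairing data of the Avella-Alaminos–Geiss algorithm: each permitted thread `H` is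
followed by the forbidden thread `forb H` ending where `H` ends (with opposite sign), and
the next permitted thread `next H` starts where `forb H` starts (with opposite sign). -/
structure GentleAlg.AGPairing (G : GentleAlg) (S : G.Signs) where
  next : G.PermThread → G.PermThread
  forb : G.PermThread → G.ForbThread
  next_bij : Function.Bijective next
  end_forb : ∀ H, G.fEnd (forb H) = G.pEnd H
  eps_forb : ∀ H, S.fEps (forb H) = ! S.pEps H
  start_next : ∀ H, G.pStart (next H) = G.fStart (forb H)
  sgn_next : ∀ H, S.pSgn (next H) = ! S.fSgn (forb H)

/-- The Avella-Alaminos–Geiss invariant `φ_A : ℕ × ℕ → ℕ` associated with a gentle algebra: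
`φ n m` is the number of orbits of the algorithm of size `n` whose forbidden threads use `m`
arrows in total (for `n = 0`, the number of full cycles of relations of length `m`). -/
noncomputable def GentleAlg.agPhi {G : GentleAlg} {S : G.Signs} (P : GentleAlg.AGPairing G S) :
    ℕ → ℕ → ℕ := fun n m =>
  if n = 0 then Nat.card {l : List (Fin G.nA) // G.IsRelCycle l ∧ l.length = m} / m
  else
    Nat.card {H : G.PermThread //
      Function.minimalPeriod P.next H = n ∧
        ∑ k ∈ Finset.range n, G.forbLen (P.forb (P.next^[k] H)) = m} / n

/-- `x` is a transition vertex with incoming arrow `α` and outgoing arrow `β`. -/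
def GentleAlg.TransitionAt (A : GentleAlg) (x : Fin A.nV) (α β : Fin A.nA) : Prop :=
  α ≠ β ∧ A.tgt α = x ∧ A.src β = x ∧ (∀ a, A.tgt a = x → a = α) ∧
    (∀ a, A.src a = x → a = β) ∧ ¬ A.rel β α

/-- `B` is the contraction `A ∖ {x}` of `A` at the transition vertex `x`, replacing the
arrows `α`, `β` by a single arrow (indexed by `none`). -/
def GentleAlg.IsContraction (A : GentleAlg) (x : Fin A.nV) (α β : Fin A.nA)
    (B : GentleAlg) : Prop :=
  ∃ (ev : {v : Fin A.nV // v ≠ x} ≃ Fin B.nV)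
    (ea : Option {a : Fin A.nA // a ≠ α ∧ a ≠ β} ≃ Fin B.nA),
    (∀ (a : {a : Fin A.nA // a ≠ α ∧ a ≠ β}) (h : A.src a.1 ≠ x),
        B.src (ea (some a)) = ev ⟨A.src a.1, h⟩) ∧
    (∀ (a : {a : Fin A.nA // a ≠ α ∧ a ≠ β}) (h : A.tgt a.1 ≠ x),
        B.tgt (ea (some a)) = ev ⟨A.tgt a.1, h⟩) ∧
    (∀ h : A.src α ≠ x, B.src (ea none) = ev ⟨A.src α, h⟩) ∧
    (∀ h : A.tgt β ≠ x, B.tgt (ea none) = ev ⟨A.tgt β, h⟩) ∧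
    (∀ b a, B.rel (ea (some b)) (ea (some a)) ↔ A.rel b.1 a.1) ∧
    (∀ b, B.rel (ea (some b)) (ea none) ↔ A.rel b.1 β) ∧
    (∀ a, B.rel (ea none) (ea (some a)) ↔ A.rel α a.1) ∧
    (B.rel (ea none) (ea none) ↔ A.rel α β)

/-- `x` is a degree-one vertex which is the start point of the arrow `θ`, where `θ` is
involved in a relation (case (2) of the removable-vertex definition). -/
def GentleAlg.DeletionAt (A : GentleAlg) (x : Fin A.nV) (θ : Fin A.nA) : Prop :=
  A.src θ = x ∧ (∀ a, A.src a = x → a = θ) ∧ (∀ a, A.tgt a ≠ x) ∧ ∃ κ, A.rel κ θ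

/-- `B` is obtained from `A` by deleting the degree-one vertex `x` and the arrow `θ`. -/
def GentleAlg.IsDeletion (A : GentleAlg) (x : Fin A.nV) (θ : Fin A.nA) (B : GentleAlg) : Prop :=
  ∃ (ev : {v : Fin A.nV // v ≠ x} ≃ Fin B.nV) (ea : {a : Fin A.nA // a ≠ θ} ≃ Fin B.nA),
    (∀ (a : {a : Fin A.nA // a ≠ θ}) (h : A.src a.1 ≠ x),
        B.src (ea a) = ev ⟨A.src a.1, h⟩) ∧
    (∀ (a : {a : Fin A.nA // a ≠ θ}) (h : A.tgt a.1 ≠ x),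
        B.tgt (ea a) = ev ⟨A.tgt a.1, h⟩) ∧
    ∀ b a, B.rel (ea b) (ea a) ↔ A.rel b.1 a.1

/-- `B` is obtained from `A` by removing a vertex `x` as in the contraction construction
(Definition of `A ∖ {x}`). -/
def GentleAlg.RemovableTo (A : GentleAlg) (x : Fin A.nV) (B : GentleAlg) : Prop :=
  (∃ α β, GentleAlg.TransitionAt A x α β ∧ GentleAlg.IsContraction A x α β B) ∨
    ∃ θ, GentleAlg.DeletionAt A x θ ∧ GentleAlg.IsDeletion A x θ B

/-- The configuration for the vertex transformation `V_i` (generic case). -/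
structure GentleAlg.VertexConfig (A : GentleAlg) where
  i : Fin A.nV
  j1 : Fin A.nV
  j2 : Fin A.nV
  s1 : Fin A.nV
  s2 : Fin A.nV
  p1 : Fin A.nV
  p2 : Fin A.nV
  α1 : Fin A.nA
  α2 : Fin A.nA
  σ1 : Fin A.nA
  σ2 : Fin A.nA
  π1 : Fin A.nA
  π2 : Fin A.nA
  hα1s : A.src α1 = i
  hα1t : A.tgt α1 = j1
  hα2s : A.src α2 = i
  hα2t : A.tgt α2 = j2
  hαne : α1 ≠ α2
  hj1 : j1 ≠ i
  hj2 : j2 ≠ i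
  hs1 : s1 ≠ i
  hs2 : s2 ≠ i
  hσ1s : A.src σ1 = j1
  hσ1t : A.tgt σ1 = s1
  hσ2s : A.src σ2 = j2
  hσ2t : A.tgt σ2 = s2
  hrσ1 : A.rel σ1 α1
  hrσ2 : A.rel σ2 α2
  hπ1s : A.src π1 = p1
  hπ1t : A.tgt π1 = i
  hπ2s : A.src π2 = p2
  hπ2t : A.tgt π2 = i
  hrπ1 : A.rel α1 π1
  hrπ2 : A.rel α2 π2

namespace GentleAlg.VertexConfig

variable {A : GentleAlg} (d : A.VertexConfig)

/-- Sources of the arrows after the vertex transformation. -/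
def newSrc : Fin A.nA → Fin A.nV := fun a =>
  if a = d.α1 then d.j1
  else if a = d.α2 then d.j2
  else if a = d.σ1 ∨ a = d.σ2 then d.i
  else if a = d.π1 then d.p2
  else if a = d.π2 then d.p1
  else A.src a

/-- Targets of the arrows after the vertex transformation. -/
def newTgt : Fin A.nA → Fin A.nV := fun a =>
  if a = d.α1 ∨ a = d.α2 then d.i
  else if a = d.π1 then d.j1
  else if a = d.π2 then d.j2
  else A.tgt a

/-- Relations after the vertex transformation. -/
def newRel : Fin A.nA → Fin A.nA → Prop := fun b a =>
  ((b = d.σ1 ∧ a = d.α2) ∨ (b = d.σ2 ∧ a = d.α1) ∨ (b = d.α1 ∧ a = d.π1) ∨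
      (b = d.α2 ∧ a = d.π2)) ∨
    (A.rel b a ∧
      ¬((b = d.σ1 ∧ a = d.α1) ∨ (b = d.σ2 ∧ a = d.α2) ∨ (b = d.α1 ∧ a = d.π1) ∨
        (b = d.α2 ∧ a = d.π2)))

end GentleAlg.VertexConfig

/-- `B` is the result of the vertex transformation `V_i` of `A` given by the
configuration `d`. -/
def GentleAlg.IsVertexTransform (A : GentleAlg) (d : A.VertexConfig) (B : GentleAlg) : Prop :=
  ∃ (hV : B.nV = A.nV) (hA : B.nA = A.nA),
    (∀ a : Fin A.nA, B.src (Fin.cast hA.symm a) = Fin.cast hV.symm (d.newSrc a)) ∧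
    (∀ a : Fin A.nA, B.tgt (Fin.cast hA.symm a) = Fin.cast hV.symm (d.newTgt a)) ∧
    ∀ b a : Fin A.nA, B.rel (Fin.cast hA.symm b) (Fin.cast hA.symm a) ↔ d.newRel b a

/-- The configuration for the arrow transformation `F_δ`. -/
structure GentleAlg.ArrowConfig (A : GentleAlg) where
  i : Fin A.nV
  j : Fin A.nV
  b : Fin A.nV
  c : Fin A.nV
  l : Fin A.nV
  x : Fin A.nV
  δ : Fin A.nA
  β : Fin A.nA
  γ : Fin A.nA
  lam : Fin A.nA
  ξ : Fin A.nA
  hij : i ≠ j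
  hδs : A.src δ = i
  hδt : A.tgt δ = j
  hβs : A.src β = b
  hβt : A.tgt β = i
  hγs : A.src γ = i
  hγt : A.tgt γ = c
  hlams : A.src lam = l
  hlamt : A.tgt lam = i
  hξs : A.src ξ = j
  hξt : A.tgt ξ = x
  hγδ : γ ≠ δ
  hβlam : β ≠ lam
  hrβ : A.rel δ β
  hrlam : A.rel γ lam
  hrξ : A.rel ξ δ
  /-- the separation condition `Q₀¹ ∩ Q₀² = ∅`: after removing `β` and `γ`, the vertices
  `b` and `c` are not connected to `i`. -/
  hsep1 : ¬ Relation.ReflTransGen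
    (A.toFinQuiver.adjOn ((Finset.univ.erase β).erase γ)) b i
  hsep2 : ¬ Relation.ReflTransGen
    (A.toFinQuiver.adjOn ((Finset.univ.erase β).erase γ)) c i

namespace GentleAlg.ArrowConfig

variable {A : GentleAlg} (d : A.ArrowConfig)

/-- Sources of the arrows after the arrow transformation. -/
def newSrc : Fin A.nA → Fin A.nV := fun a =>
  if a = d.δ then d.j else if a = d.ξ then d.i else A.src a

/-- Targets of the arrows after the arrow transformation. -/
def newTgt : Fin A.nA → Fin A.nV := fun a =>
  if a = d.δ then d.i else if a = d.lam then d.j else A.tgt a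

/-- Relations after the arrow transformation. -/
def newRel : Fin A.nA → Fin A.nA → Prop := fun b' a =>
  ((b' = d.γ ∧ a = d.δ) ∨ (b' = d.ξ ∧ a = d.β) ∨ (b' = d.δ ∧ a = d.lam)) ∨
    (A.rel b' a ∧
      ¬((b' = d.δ ∧ a = d.β) ∨ (b' = d.γ ∧ a = d.lam) ∨ (b' = d.ξ ∧ a = d.δ)))

end GentleAlg.ArrowConfig

/-- `B` is the result of the arrow transformation `F_δ` of `A` given by the
configuration `d`. -/
def GentleAlg.IsArrowTransform (A : GentleAlg) (d : A.ArrowConfig) (B : GentleAlg) : Prop :=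
  ∃ (hV : B.nV = A.nV) (hA : B.nA = A.nA),
    (∀ a : Fin A.nA, B.src (Fin.cast hA.symm a) = Fin.cast hV.symm (d.newSrc a)) ∧
    (∀ a : Fin A.nA, B.tgt (Fin.cast hA.symm a) = Fin.cast hV.symm (d.newTgt a)) ∧
    ∀ b a : Fin A.nA, B.rel (Fin.cast hA.symm b) (Fin.cast hA.symm a) ↔ d.newRel b a

/-- The configuration for the loop transformation `L_λ`. -/
structure GentleAlg.LoopConfig (A : GentleAlg) where
  i : Fin A.nV
  j : Fin A.nV
  l : Fin A.nV
  x : Fin A.nV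
  lam : Fin A.nA
  α : Fin A.nA
  δ : Fin A.nA
  ξ : Fin A.nA
  hij : i ≠ j
  hlams : A.src lam = i
  hlamt : A.tgt lam = i
  hαs : A.src α = l
  hαt : A.tgt α = i
  hδs : A.src δ = i
  hδt : A.tgt δ = j
  hξs : A.src ξ = j
  hξt : A.tgt ξ = x
  hαlam : α ≠ lam
  hδlam : δ ≠ lam
  hrα : A.rel δ α
  hrξ : A.rel ξ δ

namespace GentleAlg.LoopConfig

variable {A : GentleAlg} (d : A.LoopConfig)

/-- Sources of the arrows after the loop transformation. -/
def newSrc : Fin A.nA → Fin A.nV := fun a =>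
  if a = d.δ then d.j else if a = d.ξ then d.i else A.src a

/-- Targets of the arrows after the loop transformation. -/
def newTgt : Fin A.nA → Fin A.nV := fun a =>
  if a = d.α then d.j else if a = d.δ then d.i else A.tgt a

end GentleAlg.LoopConfig

/-- `B` is the result of the loop transformation `L_λ` of `A` given by the
configuration `d`. -/
def GentleAlg.IsLoopTransform (A : GentleAlg) (d : A.LoopConfig) (B : GentleAlg) : Prop :=
  ∃ (hV : B.nV = A.nV) (hA : B.nA = A.nA),
    (∀ a : Fin A.nA, B.src (Fin.cast hA.symm a) = Fin.cast hV.symm (d.newSrc a)) ∧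
    (∀ a : Fin A.nA, B.tgt (Fin.cast hA.symm a) = Fin.cast hV.symm (d.newTgt a)) ∧
    ∀ b a : Fin A.nA, B.rel (Fin.cast hA.symm b) (Fin.cast hA.symm a) ↔ A.rel b a

/-- `B` is obtained from `A` by a single elementary transformation (over a vertex, an
arrow or a loop). -/
def GentleAlg.ElemMove (A B : GentleAlg) : Prop :=
  (∃ d : A.VertexConfig, GentleAlg.IsVertexTransform A d B) ∨
    (∃ d : A.ArrowConfig, GentleAlg.IsArrowTransform A d B) ∨
    ∃ d : A.LoopConfig, GentleAlg.IsLoopTransform A d B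

/-- `A` and `B` are derived equivalent under elementary transformations: `B` is obtained
from `A` by a finite sequence of elementary transformations and their inverses. -/
def GentleAlg.ElemEquiv (A B : GentleAlg) : Prop :=
  Relation.ReflTransGen (fun X Y => GentleAlg.ElemMove X Y ∨ GentleAlg.ElemMove Y X) A B

/-- The defining relations of the algebra `kQ/⟨P⟩` inside the free algebra on the
idempotents (vertices) and the arrows. -/
inductive GentleAlg.PathRel (G : GentleAlg) :
    FreeAlgebra ℚ (Fin G.nV ⊕ Fin G.nA) → FreeAlgebra ℚ (Fin G.nV ⊕ Fin G.nA) → Prop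
  | idem (v : Fin G.nV) :
      GentleAlg.PathRel G (FreeAlgebra.ι ℚ (Sum.inl v) * FreeAlgebra.ι ℚ (Sum.inl v))
        (FreeAlgebra.ι ℚ (Sum.inl v))
  | orth (v w : Fin G.nV) : v ≠ w →
      GentleAlg.PathRel G (FreeAlgebra.ι ℚ (Sum.inl v) * FreeAlgebra.ι ℚ (Sum.inl w)) 0
  | unit :
      GentleAlg.PathRel G (∑ v : Fin G.nV, FreeAlgebra.ι ℚ (Sum.inl v)) 1
  | left_id (a : Fin G.nA) :
      GentleAlg.PathRel G (FreeAlgebra.ι ℚ (Sum.inl (G.tgt a)) * FreeAlgebra.ι ℚ (Sum.inr a))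
        (FreeAlgebra.ι ℚ (Sum.inr a))
  | right_id (a : Fin G.nA) :
      GentleAlg.PathRel G (FreeAlgebra.ι ℚ (Sum.inr a) * FreeAlgebra.ι ℚ (Sum.inl (G.src a)))
        (FreeAlgebra.ι ℚ (Sum.inr a))
  | left_ann (v : Fin G.nV) (a : Fin G.nA) : v ≠ G.tgt a →
      GentleAlg.PathRel G (FreeAlgebra.ι ℚ (Sum.inl v) * FreeAlgebra.ι ℚ (Sum.inr a)) 0
  | right_ann (v : Fin G.nV) (a : Fin G.nA) : v ≠ G.src a →
      GentleAlg.PathRel G (FreeAlgebra.ι ℚ (Sum.inr a) * FreeAlgebra.ι ℚ (Sum.inl v)) 0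
  | zero_rel (b a : Fin G.nA) : G.rel b a →
      GentleAlg.PathRel G (FreeAlgebra.ι ℚ (Sum.inr b) * FreeAlgebra.ι ℚ (Sum.inr a)) 0

/-- The gentle algebra `kQ/⟨P⟩` as an actual ring (over `k = ℚ`). -/
def GentleAlg.kAlg (G : GentleAlg) : Type := RingQuot (GentleAlg.PathRel G)

noncomputable instance (G : GentleAlg) : Ring (GentleAlg.kAlg G) :=
  inferInstanceAs (Ring (RingQuot (GentleAlg.PathRel G)))

/-- Two rings are derived equivalent if their derived categories of modules are
equivalent. -/
def DerivedEquiv (R S : Type) [Ring R] [Ring S] : Prop :=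
  letI : HasDerivedCategory (ModuleCat.{0} R) := HasDerivedCategory.standard _
  letI : HasDerivedCategory (ModuleCat.{0} S) := HasDerivedCategory.standard _
  Nonempty (DerivedCategory (ModuleCat.{0} R) ≌ DerivedCategory (ModuleCat.{0} S))

/-- `A` is (isomorphic to) the gentle algebra with `n` vertices, `m` arrows, sources `s`,
targets `t` and relations `r`. -/
def GentleAlg.MatchesData (A : GentleAlg) (n m : ℕ) (s t : Fin m → Fin n)
    (r : Fin m → Fin m → Prop) : Prop :=
  ∃ (hV : A.nV = n) (hA : A.nA = m),
    (∀ a : Fin m, A.src (Fin.cast hA.symm a) = Fin.cast hV.symm (s a)) ∧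
    (∀ a : Fin m, A.tgt (Fin.cast hA.symm a) = Fin.cast hV.symm (t a)) ∧
    ∀ b a : Fin m, A.rel (Fin.cast hA.symm b) (Fin.cast hA.symm a) ↔ r b a

/-- The number of nonzero paths from `y` to `x` in the gentle algebra `A` (including the
trivial path when `x = y`). -/
noncomputable def GentleAlg.numPaths (A : GentleAlg) (x y : Fin A.nV) : ℕ :=
  Nat.card {l : List (Fin A.nA) // A.IsPermPath l ∧
    ((l = [] ∧ x = y) ∨
      ∃ h hl, l.head? = some h ∧ l.getLast? = some hl ∧ A.src h = y ∧ A.tgt hl = x)}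

/-- Isomorphism of gentle algebras (as quivers with relations). -/
def GentleAlg.Iso (A B : GentleAlg) : Prop :=
  ∃ (ev : Fin A.nV ≃ Fin B.nV) (ea : Fin A.nA ≃ Fin B.nA),
    (∀ a, B.src (ea a) = ev (A.src a)) ∧ (∀ a, B.tgt (ea a) = ev (A.tgt a)) ∧
      ∀ b a, B.rel (ea b) (ea a) ↔ A.rel b a

/-- A perfect matching of `[2n]`, encoded as a fixed-point-free involution. -/
def PerfectMatching (n : ℕ) : Type :=
  {f : Equiv.Perm (Fin (2 * n)) // ∀ i, f i ≠ i ∧ f (f i) = i}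

private lemma FinQuiver.no_loop_deg_two (Q : FinQuiver) (hconn : Q.Connected) (h2 : 2 ≤ Q.nV)
    (u : Fin Q.nV) (hdegu : Q.deg u = 2) (a0 : Fin Q.nA) (hs : Q.src a0 = u)
    (ht : Q.tgt a0 = u) : False := by
  unfold FinQuiver.deg at hdegu
  have hc1 : 1 ≤ (Finset.univ.filter fun b => Q.src b = u).card :=
    Finset.card_pos.mpr ⟨a0, by simp [hs]⟩
  have hc2 : 1 ≤ (Finset.univ.filter fun b => Q.tgt b = u).card :=
    Finset.card_pos.mpr ⟨a0, by simp [ht]⟩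
  have hsrc : ∀ a, Q.src a = u → a = a0 := by
    intro a ha
    by_contra hne
    have hsub : ({a, a0} : Finset (Fin Q.nA)) ⊆ Finset.univ.filter fun b => Q.src b = u := by
      intro b hb; simp only [Finset.mem_insert, Finset.mem_singleton] at hb
      rcases hb with rfl | rfl <;> simp [ha, hs]
    have := Finset.card_le_card hsub
    rw [Finset.card_pair hne] at this
    omega
  have htgt : ∀ a, Q.tgt a = u → a = a0 := by
    intro a ha
    by_contra hne
    have hsub : ({a, a0} : Finset (Fin Q.nA)) ⊆ Finset.univ.filter fun b => Q.tgt b = u := by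
      intro b hb; simp only [Finset.mem_insert, Finset.mem_singleton] at hb
      rcases hb with rfl | rfl <;> simp [ha, ht]
    have := Finset.card_le_card hsub
    rw [Finset.card_pair hne] at this
    omega
  have key : ∀ x, Relation.ReflTransGen (Q.adjOn Finset.univ) u x → x = u := by
    intro x hx
    induction hx with
    | refl => rfl
    | tail _ hadj ih =>
      obtain ⟨a, -, hab⟩ := hadj
      rcases hab with ⟨h1, h2⟩ | ⟨h1, h2⟩
      · rw [ih] at h1
        rw [← h2, hsrc a h1, ht]
      · rw [ih] at h2
        rw [← h1, htgt a h2, hs]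
  have : Nontrivial (Fin Q.nV) := Fin.nontrivial_iff_two_le.mpr h2
  obtain ⟨x, hx⟩ := exists_ne u
  exact hx (key x (hconn.2 u x))

/-- a connected quiver with `#Q₁ = #Q₀ + 1`, at least six vertices, all
degrees in `[2,4]`, and either one vertex of degree `4` or two of degree `3` (all others
of degree `2`), contains two adjacent vertices of degree `2`. -/
theorem adjacent_degree_two (Q : FinQuiver) (hconn : Q.Connected) (hA : Q.nA = Q.nV + 1)
    (h6 : 6 ≤ Q.nV) (hdeg : ∀ v, 2 ≤ Q.deg v ∧ Q.deg v ≤ 4)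
    (hex : (∃ v, Q.deg v = 4 ∧ ∀ w, w ≠ v → Q.deg w = 2) ∨
      ∃ v w, v ≠ w ∧ Q.deg v = 3 ∧ Q.deg w = 3 ∧ ∀ u, u ≠ v → u ≠ w → Q.deg u = 2) :
    ∃ v w, v ≠ w ∧ Q.deg v = 2 ∧ Q.deg w = 2 ∧ Q.adj v w := by
  by_contra hcon
  push_neg at hcon
  have hcard : (Finset.univ : Finset (Fin Q.nA)).card = Q.nA := by
    simp
  have noadj : ∀ a : Fin Q.nA, Q.deg (Q.src a) = 2 → Q.deg (Q.tgt a) = 2 → False := by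
    intro a d1 d2
    by_cases he : Q.src a = Q.tgt a
    · exact Q.no_loop_deg_two hconn (by omega) _ d1 a rfl he.symm
    · exact hcon _ _ he d1 d2 ⟨a, Finset.mem_univ a, Or.inl ⟨rfl, rfl⟩⟩
  rcases hex with ⟨v, hv4, hrest⟩ | ⟨v, w, hvw, hv3, hw3, hrest⟩
  · have touch : ∀ a, Q.src a = v ∨ Q.tgt a = v := by
      intro a
      by_contra h
      push_neg at h
      exact noadj a (hrest _ h.1) (hrest _ h.2)
    have hsub : (Finset.univ : Finset (Fin Q.nA)) ⊆
        (Finset.univ.filter fun a => Q.src a = v) ∪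
          (Finset.univ.filter fun a => Q.tgt a = v) := by
      intro a _
      rcases touch a with h | h <;> simp [h]
    have h1 := Finset.card_le_card hsub
    have h2 := Finset.card_union_le (Finset.univ.filter fun a => Q.src a = v)
      (Finset.univ.filter fun a => Q.tgt a = v)
    unfold FinQuiver.deg at hv4
    omega
  · have touch : ∀ a, (Q.src a = v ∨ Q.src a = w) ∨ (Q.tgt a = v ∨ Q.tgt a = w) := by
      intro a
      by_contra h
      push_neg at h
      exact noadj a (hrest _ h.1.1 h.1.2) (hrest _ h.2.1 h.2.2)
    have hsub : (Finset.univ : Finset (Fin Q.nA)) ⊆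
        ((Finset.univ.filter fun a => Q.src a = v) ∪
          (Finset.univ.filter fun a => Q.src a = w)) ∪
        ((Finset.univ.filter fun a => Q.tgt a = v) ∪
          (Finset.univ.filter fun a => Q.tgt a = w)) := by
      intro a _
      rcases touch a with h | h <;> rcases h with h | h <;> simp [h]
    have h1 := Finset.card_le_card hsub
    have h2 := Finset.card_union_le
      ((Finset.univ.filter fun a => Q.src a = v) ∪
        (Finset.univ.filter fun a => Q.src a = w))
      ((Finset.univ.filter fun a => Q.tgt a = v) ∪
        (Finset.univ.filter fun a => Q.tgt a = w))
    have h3 := Finset.card_union_le (Finset.univ.filter fun a => Q.src a = v)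
      (Finset.univ.filter fun a => Q.src a = w)
    have h4 := Finset.card_union_le (Finset.univ.filter fun a => Q.tgt a = v)
      (Finset.univ.filter fun a => Q.tgt a = w)
    unfold FinQuiver.deg at hv3 hw3
    omega
end

section
/- Let A = kQ/⟨P⟩ be a gentle algebra where Q has two cycles and x ∈ Q_0 is a transition vertex (exactly one incoming arrow α, one outgoing arrow β, with βα ∉ P). Then the algebra A∖{x}, obtained by deleting x and replacing α, β by a single arrow α' from s(α) to e(β) with relations inherited accordingly, is again a gentle algebra whose quiver is connected with two cycles and has exactly one vertex and one arrow fewer than Q. -/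
open Function CategoryTheory

namespace ContractAux

abbrev VSub (A : GentleAlg) (x : Fin A.nV) := {v : Fin A.nV // v ≠ x}
abbrev ASub (A : GentleAlg) (α β : Fin A.nA) := Option {a : Fin A.nA // a ≠ α ∧ a ≠ β}

section

variable {A : GentleAlg} {x : Fin A.nV} {α β : Fin A.nA}
  (ht : GentleAlg.TransitionAt A x α β)

/-- representative of an `ASub` arrow in its "successor" (source-side) role -/
def hRepr : ASub A α β → Fin A.nA := fun q => q.elim α (·.1)

/-- representative of an `ASub` arrow in its "predecessor" (target-side) role -/
def tRepr : ASub A α β → Fin A.nA := fun q => q.elim β (·.1)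

lemma hRepr_inj : Function.Injective (hRepr (A := A) (α := α) (β := β)) := by
  rintro (_ | a) (_ | b) h
  · rfl
  · exact absurd h.symm b.2.1
  · exact absurd h a.2.1
  · exact congrArg some (Subtype.ext h)

lemma tRepr_inj : Function.Injective (tRepr (A := A) (α := α) (β := β)) := by
  rintro (_ | a) (_ | b) h
  · rfl
  · exact absurd h.symm b.2.2
  · exact absurd h a.2.2
  · exact congrArg some (Subtype.ext h)

include ht

lemma src_ne (a : Fin A.nA) (h : a ≠ β) : A.src a ≠ x :=
  fun hs => h (ht.2.2.2.2.1 a hs)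

lemma tgt_ne (a : Fin A.nA) (h : a ≠ α) : A.tgt a ≠ x :=
  fun hs => h (ht.2.2.2.1 a hs)

lemma src_alpha_ne : A.src α ≠ x := src_ne ht α ht.1

lemma tgt_beta_ne : A.tgt β ≠ x := tgt_ne ht β ht.1.symm

lemma hRepr_ne_beta (q : ASub A α β) : hRepr q ≠ β := by
  cases q with
  | none => exact ht.1
  | some a => exact a.2.2

lemma tRepr_ne_alpha (q : ASub A α β) : tRepr q ≠ α := by
  cases q with
  | none => exact ht.1.symm
  | some a => exact a.2.1

def src' : ASub A α β → VSub A x := fun q =>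
  ⟨A.src (hRepr q), src_ne ht _ (hRepr_ne_beta ht q)⟩

def tgt' : ASub A α β → VSub A x := fun q =>
  ⟨A.tgt (tRepr q), tgt_ne ht _ (tRepr_ne_alpha ht q)⟩

end

noncomputable def ev (A : GentleAlg) (x : Fin A.nV) :
    VSub A x ≃ Fin (Fintype.card (VSub A x)) := Fintype.equivFin _

noncomputable def ea (A : GentleAlg) (α β : Fin A.nA) :
    ASub A α β ≃ Fin (Fintype.card (ASub A α β)) := Fintype.equivFin _

end ContractAux
namespace ContractAux

section

variable {A : GentleAlg} {x : Fin A.nV} {α β : Fin A.nA}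
  (ht : GentleAlg.TransitionAt A x α β)

/-- expansion of an `ASub` arrow to a list of arrows of `A` -/
def expand : ASub A α β → List (Fin A.nA) := fun q => q.elim [α, β] (fun a => [a.1])

lemma expand_ne_nil (q : ASub A α β) : expand q ≠ [] := by
  cases q <;> simp [expand]

lemma head?_expand (q : ASub A α β) : (expand q).head? = some (hRepr q) := by
  cases q <;> rfl

lemma getLast?_expand (q : ASub A α β) : (expand q).getLast? = some (tRepr q) := by
  cases q <;> rfl

lemma head?_flat : ∀ l : List (ASub A α β),
    (l.flatMap expand).head? = l.head?.map hRepr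
  | [] => rfl
  | q :: t => by
      rw [List.flatMap_cons, List.head?_append, head?_expand]
      rfl

lemma getLast?_flat : ∀ l : List (ASub A α β),
    (l.flatMap expand).getLast? = l.getLast?.map tRepr
  | [] => rfl
  | [q] => by
      rw [List.flatMap_cons]
      simp [getLast?_expand]
  | q :: q' :: t => by
      rw [List.flatMap_cons, List.getLast?_append, getLast?_flat (q' :: t)]
      have h1 : (q' :: t).getLast? = some ((q' :: t).getLast (by simp)) :=
        List.getLast?_eq_getLast _
      rw [h1]
      simp [List.getLast?_cons_cons, h1]

/-- the composability relation for permitted paths in `A` -/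
def RA (A : GentleAlg) : Fin A.nA → Fin A.nA → Prop :=
  fun a b => A.tgt a = A.src b ∧ ¬ A.rel b a

/-- the induced composability relation on `ASub` -/
def R' (A : GentleAlg) (α β : Fin A.nA) : ASub A α β → ASub A α β → Prop :=
  fun p q => A.tgt (tRepr p) = A.src (hRepr q) ∧ ¬ A.rel (hRepr q) (tRepr p)

include ht

lemma chain_expand_single (q : ASub A α β) : (expand q).Chain' (RA A) := by
  cases q with
  | none =>
      refine List.isChain_cons_cons.2 ⟨⟨ht.2.1.trans ht.2.2.1.symm, ht.2.2.2.2.2⟩, ?_⟩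
      simp
  | some a => exact List.isChain_singleton _

lemma chain_flat : ∀ l : List (ASub A α β), l.Chain' (R' A α β) →
    (l.flatMap expand).Chain' (RA A)
  | [] => fun _ => List.isChain_nil
  | q :: t => fun h => by
      rw [List.flatMap_cons]
      refine List.isChain_append.2 ⟨chain_expand_single ht q, chain_flat t ((List.isChain_cons.1 h).2), ?_⟩
      intro p hp y hy
      rw [getLast?_expand] at hp
      rw [head?_flat] at hy
      cases Option.some_inj.1 hp
      match t, hy with
      | q' :: t', hy =>
          cases Option.some_inj.1 hy.symm
          exact (List.isChain_cons.1 h).1 q' rfl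

end

end ContractAux
namespace ContractAux

variable {A : GentleAlg} {x : Fin A.nV} {α β : Fin A.nA}

/-- The contracted gentle algebra. -/
noncomputable def contract (ht : GentleAlg.TransitionAt A x α β) : GentleAlg where
  nV := Fintype.card (VSub A x)
  nA := Fintype.card (ASub A α β)
  src := fun q => ev A x (src' ht ((ea A α β).symm q))
  tgt := fun q => ev A x (tgt' ht ((ea A α β).symm q))
  rel := fun b a => A.rel (hRepr ((ea A α β).symm b)) (tRepr ((ea A α β).symm a))
  rel_dec := fun b a => A.rel_dec _ _
  rel_comp := fun b a h =>
    congrArg (ev A x) (Subtype.ext (A.rel_comp _ _ h))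
  out_le_two := by
    intro v
    refine le_trans (Nat.card_le_card_of_injective
      (fun p : {a // ev A x (src' ht ((ea A α β).symm a)) = v} =>
        (⟨hRepr ((ea A α β).symm p.1), ?_⟩ :
          {a : Fin A.nA // A.src a = ((ev A x).symm v).1})) ?_)
      (A.out_le_two ((ev A x).symm v).1)
    · have h5 : (ev A x).symm v = src' ht ((ea A α β).symm p.1) := by
        exact ((ev A x).symm_apply_eq).2 p.2.symm
      exact (congrArg Subtype.val h5).symm
    · intro p q hpq
      have := hRepr_inj (Subtype.mk_eq_mk.1 hpq)
      exact Subtype.ext ((ea A α β).symm.injective this)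
  in_le_two := by
    intro v
    refine le_trans (Nat.card_le_card_of_injective
      (fun p : {a // ev A x (tgt' ht ((ea A α β).symm a)) = v} =>
        (⟨tRepr ((ea A α β).symm p.1), ?_⟩ :
          {a : Fin A.nA // A.tgt a = ((ev A x).symm v).1})) ?_)
      (A.in_le_two ((ev A x).symm v).1)
    · have h5 : (ev A x).symm v = tgt' ht ((ea A α β).symm p.1) := by
        exact ((ev A x).symm_apply_eq).2 p.2.symm
      exact (congrArg Subtype.val h5).symm
    · intro p q hpq
      have := tRepr_inj (Subtype.mk_eq_mk.1 hpq)
      exact Subtype.ext ((ea A α β).symm.injective this)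
  perm_pred_unique := by
    intro b a a' h1 h2 h3 h4
    refine (ea A α β).symm.injective (tRepr_inj (A.perm_pred_unique _ _ _ ?_ h2 ?_ h4))
    · exact congrArg Subtype.val ((ev A x).injective h1)
    · exact congrArg Subtype.val ((ev A x).injective h3)
  perm_succ_unique := by
    intro b c c' h1 h2 h3 h4
    refine (ea A α β).symm.injective (hRepr_inj (A.perm_succ_unique _ _ _ ?_ h2 ?_ h4))
    · exact congrArg Subtype.val ((ev A x).injective h1)
    · exact congrArg Subtype.val ((ev A x).injective h3)
  rel_pred_unique := fun b a a' h h' =>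
    (ea A α β).symm.injective (tRepr_inj (A.rel_pred_unique _ _ _ h h'))
  rel_succ_unique := fun b c c' h h' =>
    (ea A α β).symm.injective (hRepr_inj (A.rel_succ_unique _ _ _ h h'))
  no_perm_cycle := by
    intro l hl hchain h hl' hhead hlast hcomp
    set l2 := l.map (ea A α β).symm with hl2
    have hc2 : l2.Chain' (R' A α β) := by
      rw [hl2]; refine (List.isChain_map _).2 ?_
      refine List.IsChain.imp ?_ hchain
      intro a b hab
      exact ⟨congrArg Subtype.val ((ev A x).injective hab.1), hab.2⟩
    have hL := chain_flat ht l2 hc2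
    have hLnil : l2.flatMap expand ≠ [] := by
      cases l with
      | nil => exact absurd rfl hl
      | cons a t =>
          rw [hl2]
          simp only [List.map_cons, List.flatMap_cons]
          exact fun hh => expand_ne_nil _ (List.append_eq_nil_iff.1 hh).1
    have := A.no_perm_cycle (l2.flatMap expand) hLnil hL
      (hRepr ((ea A α β).symm h)) (tRepr ((ea A α β).symm hl'))
      (by rw [head?_flat, hl2, List.head?_map, hhead]; rfl)
      (by rw [getLast?_flat, hl2, List.getLast?_map, hlast]; rfl)
      (congrArg Subtype.val ((ev A x).injective hcomp))
    exact this

end ContractAux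
namespace ContractAux

lemma adjOn_symm (Q : FinQuiver) (S : Finset (Fin Q.nA)) : Symmetric (Q.adjOn S) :=
  fun _ _ ⟨a, ha, h⟩ => ⟨a, ha, h.symm⟩

lemma transfer (Q Q' : FinQuiver) (S : Finset (Fin Q.nA)) (S' : Finset (Fin Q'.nA))
    (f : Fin Q.nV → Fin Q'.nV) (hsurj : Function.Surjective f)
    (hcore : ∀ a ∈ S, Relation.ReflTransGen (Q'.adjOn S') (f (Q.src a)) (f (Q.tgt a)))
    (hconn : Q.ConnectedOn S) : Q'.ConnectedOn S' := by
  have hstep : ∀ v w, Q.adjOn S v w →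
      Relation.ReflTransGen (Q'.adjOn S') (f v) (f w) := by
    rintro v w ⟨a, ha, (⟨h1, h2⟩ | ⟨h1, h2⟩)⟩
    · subst h1; subst h2; exact hcore a ha
    · subst h1; subst h2
      exact (@Relation.ReflTransGen.stdSymm _ _ ⟨adjOn_symm Q' S'⟩).symm _ _ (hcore a ha)
  intro v' w'
  obtain ⟨v, rfl⟩ := hsurj v'
  obtain ⟨w, rfl⟩ := hsurj w'
  have h := hconn v w
  induction h with
  | refl => exact Relation.ReflTransGen.refl
  | tail _ h2 ih => exact ih.trans (hstep _ _ h2)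

variable {A : GentleAlg} {x : Fin A.nV} {α β : Fin A.nA}

def proj (y : VSub A x) (v : Fin A.nV) : VSub A x := if h : v = x then y else ⟨v, h⟩

lemma proj_ne (y : VSub A x) {v : Fin A.nV} (h : v ≠ x) : proj y v = ⟨v, h⟩ :=
  dif_neg h

lemma proj_x (y : VSub A x) : proj y x = y := dif_pos rfl

lemma proj_surj (y : VSub A x) :
    Function.Surjective (fun v => ev A x (proj y v)) := by
  intro v'
  refine ⟨((ev A x).symm v').1, ?_⟩
  simp only [proj_ne y ((ev A x).symm v').2]
  simp

section

variable (ht : GentleAlg.TransitionAt A x α β)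

lemma adj_step_some (S' : Finset (Fin (contract ht).nA)) (y : VSub A x)
    (a : Fin A.nA) (h1 : a ≠ α) (h2 : a ≠ β)
    (hin : (ea A α β) (some ⟨a, h1, h2⟩) ∈ S') :
    (contract ht).toFinQuiver.adjOn S'
      (ev A x (proj y (A.src a))) (ev A x (proj y (A.tgt a))) := by
  refine ⟨ea A α β (some ⟨a, h1, h2⟩), hin, Or.inl ⟨?_, ?_⟩⟩
  · show ev A x (src' ht ((ea A α β).symm (ea A α β (some ⟨a, h1, h2⟩)))) = _
    rw [Equiv.symm_apply_apply, proj_ne y (src_ne ht a h2)]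
    rfl
  · show ev A x (tgt' ht ((ea A α β).symm (ea A α β (some ⟨a, h1, h2⟩)))) = _
    rw [Equiv.symm_apply_apply, proj_ne y (tgt_ne ht a h1)]
    rfl

lemma adj_step_none (S' : Finset (Fin (contract ht).nA))
    (hin : (ea A α β) none ∈ S') :
    (contract ht).toFinQuiver.adjOn S'
      (ev A x ⟨A.src α, src_alpha_ne ht⟩) (ev A x ⟨A.tgt β, tgt_beta_ne ht⟩) := by
  refine ⟨ea A α β none, hin, Or.inl ⟨?_, ?_⟩⟩
  · show ev A x (src' ht ((ea A α β).symm (ea A α β none))) = _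
    rw [Equiv.symm_apply_apply]
    rfl
  · show ev A x (tgt' ht ((ea A α β).symm (ea A α β none))) = _
    rw [Equiv.symm_apply_apply]
    rfl

end

/-- lift a set of arrows avoiding `α`, `β` into `ASub` -/
def liftA (s : Finset (Fin A.nA)) (hα : α ∉ s) (hβ : β ∉ s) : Finset (ASub A α β) :=
  s.attach.image (fun a => some ⟨a.1, fun h => hα (h ▸ a.2), fun h => hβ (h ▸ a.2)⟩)

lemma card_liftA (s : Finset (Fin A.nA)) (hα : α ∉ s) (hβ : β ∉ s) :
    (liftA s hα hβ).card = s.card := by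
  rw [liftA, Finset.card_image_of_injective, Finset.card_attach]
  intro p q h
  exact Subtype.ext (Subtype.mk_eq_mk.1 (Option.some_inj.1 h))

lemma none_not_mem_liftA (s : Finset (Fin A.nA)) (hα : α ∉ s) (hβ : β ∉ s) :
    none ∉ liftA s hα hβ := by
  simp [liftA]

lemma some_mem_liftA (s : Finset (Fin A.nA)) (hα : α ∉ s) (hβ : β ∉ s)
    (p : {a : Fin A.nA // a ≠ α ∧ a ≠ β}) :
    some p ∈ liftA s hα hβ ↔ p.1 ∈ s := by
  constructor
  · intro h
    rw [liftA, Finset.mem_image] at h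
    obtain ⟨a, _, ha⟩ := h
    have := Subtype.mk_eq_mk.1 (Option.some_inj.1 ha)
    exact this ▸ a.2
  · intro h
    rw [liftA, Finset.mem_image]
    exact ⟨⟨p.1, h⟩, Finset.mem_attach _ _, by simp⟩

lemma card_VSub : Fintype.card (VSub A x) = A.nV - 1 := by
  have h : Fintype.card {v : Fin A.nV // ¬ (v = x)} =
      Fintype.card (Fin A.nV) - Fintype.card {v : Fin A.nV // v = x} :=
    Fintype.card_subtype_compl _
  rw [Fintype.card_subtype_eq, Fintype.card_fin] at h
  exact h

lemma two_le_nA (hne : α ≠ β) : 2 ≤ A.nA := by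
  have h := Finset.card_le_univ ({α, β} : Finset (Fin A.nA))
  rw [Finset.card_pair hne] at h
  simpa using h

lemma card_ASub (hne : α ≠ β) : Fintype.card (ASub A α β) = A.nA - 1 := by
  have h2 : Fintype.card {a : Fin A.nA // a ≠ α ∧ a ≠ β} = A.nA - 2 := by
    rw [Fintype.card_subtype]
    have : Finset.univ.filter (fun a : Fin A.nA => a ≠ α ∧ a ≠ β) =
        Finset.univ \ {α, β} := by
      ext a; simp [not_or]
    rw [this, Finset.card_sdiff_of_subset (Finset.subset_univ _), Finset.card_pair hne,
      Finset.card_univ, Fintype.card_fin]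
  rw [Fintype.card_option, h2]
  have := two_le_nA (A := A) hne
  omega

end ContractAux
namespace ContractAux

variable {A : GentleAlg} {x : Fin A.nV} {α β : Fin A.nA}

lemma exists_tree (ht : GentleAlg.TransitionAt A x α β) (T : Finset (Fin A.nA))
    (hTc : A.toFinQuiver.ConnectedOn T) (hTcard : T.card + 1 = A.nV) :
    ∃ g : Finset (ASub A α β),
      (contract ht).toFinQuiver.ConnectedOn (g.map (ea A α β).toEmbedding) ∧
        g.card + 1 = Fintype.card (VSub A x) := by
  have hcV := card_VSub (A := A) (x := x)
  by_cases hα : α ∈ T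
  · by_cases hβ : β ∈ T
    · -- both arrows in the tree
      have hsub : ({α, β} : Finset (Fin A.nA)) ⊆ T := by
        intro a ha
        rcases Finset.mem_insert.1 ha with h | h
        · exact h ▸ hα
        · exact (Finset.mem_singleton.1 h) ▸ hβ
      have hbα : α ∉ T \ {α, β} := by simp
      have hbβ : β ∉ T \ {α, β} := by simp
      refine ⟨insert none (liftA (T \ {α, β}) hbα hbβ), ?_, ?_⟩
      · refine transfer A.toFinQuiver (contract ht).toFinQuiver T _
          (fun v => ev A x (proj ⟨A.src α, src_alpha_ne ht⟩ v))
          (proj_surj _) ?_ hTc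
        intro a ha
        by_cases h1 : a = α
        · subst h1
          simp only [ht.2.1, proj_x, proj_ne _ (src_alpha_ne ht)]
          exact Relation.ReflTransGen.refl
        · by_cases h2 : a = β
          · subst h2
            simp only [ht.2.2.1, proj_x, proj_ne _ (tgt_beta_ne ht)]
            exact Relation.ReflTransGen.single (adj_step_none ht _
              (Finset.mem_map_of_mem _ (Finset.mem_insert_self _ _)))
          · exact Relation.ReflTransGen.single (adj_step_some ht _ _ a h1 h2
              (Finset.mem_map_of_mem _ (Finset.mem_insert_of_mem
                ((some_mem_liftA _ hbα hbβ _).2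
                  (Finset.mem_sdiff.2 ⟨ha, by simp [h1, h2]⟩)))))
      · rw [Finset.card_insert_of_notMem (none_not_mem_liftA _ hbα hbβ),
          card_liftA, Finset.card_sdiff_of_subset hsub, Finset.card_pair ht.1]
        have h2T : 2 ≤ T.card := by
          have := Finset.card_le_card hsub
          rwa [Finset.card_pair ht.1] at this
        omega
    · -- α in the tree, β not
      have hbα : α ∉ T.erase α := Finset.notMem_erase _ _
      have hbβ : β ∉ T.erase α := fun h => hβ (Finset.mem_of_mem_erase h)
      refine ⟨liftA (T.erase α) hbα hbβ, ?_, ?_⟩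
      · refine transfer A.toFinQuiver (contract ht).toFinQuiver T _
          (fun v => ev A x (proj ⟨A.src α, src_alpha_ne ht⟩ v))
          (proj_surj _) ?_ hTc
        intro a ha
        by_cases h1 : a = α
        · subst h1
          simp only [ht.2.1, proj_x, proj_ne _ (src_alpha_ne ht)]
          exact Relation.ReflTransGen.refl
        · by_cases h2 : a = β
          · exact absurd (h2 ▸ ha) hβ
          · exact Relation.ReflTransGen.single (adj_step_some ht _ _ a h1 h2
              (Finset.mem_map_of_mem _ ((some_mem_liftA _ hbα hbβ _).2
                (Finset.mem_erase.2 ⟨h1, ha⟩))))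
      · rw [card_liftA, Finset.card_erase_of_mem hα]
        have h1T : 1 ≤ T.card := Finset.card_pos.2 ⟨α, hα⟩
        omega
  · by_cases hβ : β ∈ T
    · -- β in the tree, α not
      have hbβ : β ∉ T.erase β := Finset.notMem_erase _ _
      have hbα : α ∉ T.erase β := fun h => hα (Finset.mem_of_mem_erase h)
      refine ⟨liftA (T.erase β) hbα hbβ, ?_, ?_⟩
      · refine transfer A.toFinQuiver (contract ht).toFinQuiver T _
          (fun v => ev A x (proj ⟨A.tgt β, tgt_beta_ne ht⟩ v))
          (proj_surj _) ?_ hTc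
        intro a ha
        by_cases h2 : a = β
        · subst h2
          simp only [ht.2.2.1, proj_x, proj_ne _ (tgt_beta_ne ht)]
          exact Relation.ReflTransGen.refl
        · by_cases h1 : a = α
          · exact absurd (h1 ▸ ha) hα
          · exact Relation.ReflTransGen.single (adj_step_some ht _ _ a h1 h2
              (Finset.mem_map_of_mem _ ((some_mem_liftA _ hbα hbβ _).2
                (Finset.mem_erase.2 ⟨h2, ha⟩))))
      · rw [card_liftA, Finset.card_erase_of_mem hβ]
        have h1T : 1 ≤ T.card := Finset.card_pos.2 ⟨β, hβ⟩
        omega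
    · -- neither: impossible, x would be disconnected
      exfalso
      rcases (hTc x (A.tgt β)).cases_head with h | ⟨c, ⟨a, haT, hor⟩, _⟩
      · exact tgt_beta_ne ht h.symm
      · rcases hor with ⟨hs, _⟩ | ⟨_, htg⟩
        · exact hβ ((ht.2.2.2.2.1 a hs) ▸ haT)
        · exact hα ((ht.2.2.2.1 a htg) ▸ haT)

end ContractAux
/-- contracting a gentle algebra with a two-cycle quiver at a transition
vertex yields again a gentle algebra whose quiver is connected with two cycles, having
one vertex and one arrow fewer. -/
theorem contraction_gentle (A : GentleAlg) (hconn : A.toFinQuiver.Connected)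
    (hc : A.toFinQuiver.numCycles = 2) (x : Fin A.nV) (α β : Fin A.nA)
    (ht : GentleAlg.TransitionAt A x α β) :
    ∃ B : GentleAlg, GentleAlg.IsContraction A x α β B ∧
      B.toFinQuiver.Connected ∧ B.toFinQuiver.numCycles = 2 ∧
      B.nV + 1 = A.nV ∧ B.nA + 1 = A.nA := by
  classical
  open ContractAux in
  have hcV : Fintype.card (VSub A x) = A.nV - 1 := card_VSub
  have hcA : Fintype.card (ASub A α β) = A.nA - 1 := card_ASub ht.1
  have hnA2 : 2 ≤ A.nA := two_le_nA ht.1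
  have hnV2 : 2 ≤ A.nV := by
    have h := Finset.card_le_univ ({x, A.tgt β} : Finset (Fin A.nV))
    rw [Finset.card_pair (Ne.symm (tgt_beta_ne ht))] at h
    simpa using h
  -- extract a spanning tree of A and the arrow count
  have hSAne : {n | ∃ R : Finset (Fin A.toFinQuiver.nA), R.card = n ∧
      A.toFinQuiver.IsSpanningTreeOn Rᶜ}.Nonempty := by
    by_contra h
    rw [Set.not_nonempty_iff_eq_empty] at h
    have h0 : A.toFinQuiver.numCycles = 0 := by
      rw [FinQuiver.numCycles, h, Nat.sInf_empty]
    omega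
  have h2mem : (2 : ℕ) ∈ {n | ∃ R : Finset (Fin A.toFinQuiver.nA), R.card = n ∧
      A.toFinQuiver.IsSpanningTreeOn Rᶜ} := hc ▸ Nat.sInf_mem hSAne
  obtain ⟨R, hR2, hsp⟩ := h2mem
  have hTcard : Rᶜ.card + 1 = A.nV := hsp.2
  have hAcount : A.nA = A.nV + 1 := by
    have h := Finset.card_add_card_compl R
    rw [hR2] at h
    simp only [Finset.card_univ, Fintype.card_fin] at h
    omega
  obtain ⟨g, hgconn, hgcard⟩ := exists_tree ht Rᶜ hsp.1 hTcard
  refine ⟨contract ht, ?_, ⟨?_, ?_⟩, ?_, ?_, ?_⟩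
  · -- IsContraction
    refine ⟨ev A x, ea A α β, ?_, ?_, ?_, ?_, ?_, ?_, ?_, ?_⟩
    · intro a h
      show ev A x (src' ht ((ea A α β).symm ((ea A α β) (some a)))) = _
      rw [Equiv.symm_apply_apply]; rfl
    · intro a h
      show ev A x (tgt' ht ((ea A α β).symm ((ea A α β) (some a)))) = _
      rw [Equiv.symm_apply_apply]; rfl
    · intro h
      show ev A x (src' ht ((ea A α β).symm ((ea A α β) none))) = _
      rw [Equiv.symm_apply_apply]; rfl
    · intro h
      show ev A x (tgt' ht ((ea A α β).symm ((ea A α β) none))) = _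
      rw [Equiv.symm_apply_apply]; rfl
    · intro b a
      show A.rel (hRepr ((ea A α β).symm ((ea A α β) (some b))))
        (tRepr ((ea A α β).symm ((ea A α β) (some a)))) ↔ _
      rw [Equiv.symm_apply_apply, Equiv.symm_apply_apply]
      rfl
    · intro b
      show A.rel (hRepr ((ea A α β).symm ((ea A α β) (some b))))
        (tRepr ((ea A α β).symm ((ea A α β) none))) ↔ _
      rw [Equiv.symm_apply_apply, Equiv.symm_apply_apply]
      rfl
    · intro a
      show A.rel (hRepr ((ea A α β).symm ((ea A α β) none)))
        (tRepr ((ea A α β).symm ((ea A α β) (some a)))) ↔ _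
      rw [Equiv.symm_apply_apply, Equiv.symm_apply_apply]
      rfl
    · show A.rel (hRepr ((ea A α β).symm ((ea A α β) none)))
        (tRepr ((ea A α β).symm ((ea A α β) none))) ↔ _
      rw [Equiv.symm_apply_apply]
      rfl
  · -- 0 < nV
    exact (Fintype.card_pos_iff (α := VSub A x)).2 ⟨⟨A.tgt β, tgt_beta_ne ht⟩⟩
  · -- ConnectedOn univ
    refine transfer A.toFinQuiver (contract ht).toFinQuiver Finset.univ Finset.univ
      (fun v => ev A x (proj ⟨A.src α, src_alpha_ne ht⟩ v)) (proj_surj _) ?_ hconn.2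
    intro a _
    by_cases h1 : a = α
    · subst h1
      simp only [ht.2.1, proj_x, proj_ne _ (src_alpha_ne ht)]
      exact Relation.ReflTransGen.refl
    · by_cases h2 : a = β
      · subst h2
        simp only [ht.2.2.1, proj_x, proj_ne _ (tgt_beta_ne ht)]
        exact Relation.ReflTransGen.single (adj_step_none ht _ (Finset.mem_univ _))
      · exact Relation.ReflTransGen.single
          (adj_step_some ht _ _ a h1 h2 (Finset.mem_univ _))
  · -- numCycles = 2
    have hBnA : (contract ht).nA = A.nV := by
      show Fintype.card (ASub A α β) = A.nV
      omega
    have hBnV : (contract ht).nV = A.nV - 1 := hcV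
    have h2B : (2 : ℕ) ∈ {n | ∃ R : Finset (Fin (contract ht).toFinQuiver.nA),
        R.card = n ∧ (contract ht).toFinQuiver.IsSpanningTreeOn Rᶜ} := by
      refine ⟨(g.map (ea A α β).toEmbedding)ᶜ, ?_, ?_⟩
      · rw [Finset.card_compl]
        refine (congrArg (Fintype.card (Fin (contract ht).nA) - ·)
          (Finset.card_map (s := g) (ea A α β).toEmbedding)).trans ?_
        have : Fintype.card (Fin (contract ht).toFinQuiver.nA) = A.nV := by
          rw [Fintype.card_fin]; exact hBnA
        omega
      · rw [compl_compl]
        exact ⟨hgconn, (congrArg (· + 1) (Finset.card_map (s := g) (ea A α β).toEmbedding)).trans hgcard⟩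
    have hmono : ∀ n ∈ {n | ∃ R : Finset (Fin (contract ht).toFinQuiver.nA),
        R.card = n ∧ (contract ht).toFinQuiver.IsSpanningTreeOn Rᶜ}, n = 2 := by
      rintro n ⟨R', hn, _, hcard'⟩
      have h := Finset.card_add_card_compl R'
      simp only [Finset.card_univ, Fintype.card_fin] at h
      have hc2 : R'ᶜ.card + 1 = (contract ht).nV := hcard'
      omega
    exact hmono _ (Nat.sInf_mem ⟨2, h2B⟩)
  · show Fintype.card (VSub A x) + 1 = A.nV
    omega
  · show Fintype.card (ASub A α β) + 1 = A.nA
    omega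
end
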